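/- For every nonnegative integer l, there is no representation of 2^{2l+1} - 1 as a sum a + a' with a < a' and both a, a' in the Thue–Morse set A_0; that is, R_2(A_0, 2^{2l+1} - 1) = 0. -/

import Mathlib

/-- Thue–Morse set: nonnegative integers with an even number of binary ones. -/
def A0 : Set ℕ := {n : ℕ | Even ((Nat.digits 2 n).count 1)}

/-- Number of representations n = a + a', a < a', a, a' ∈ A. -/
noncomputable def R2 (A : Set ℕ) (n : ℕ) : ℕ :=
  {p : ℕ × ℕ | p.1 < p.2 ∧ p.1 + p.2 = n ∧ p.1 ∈ A ∧ p.2 ∈ A}.ncard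

/-- Number of representations n = a + a', a ≤ a', a, a' ∈ A. -/
noncomputable def R3 (A : Set ℕ) (n : ℕ) : ℕ :=
  {p : ℕ × ℕ | p.1 ≤ p.2 ∧ p.1 + p.2 = n ∧ p.1 ∈ A ∧ p.2 ∈ A}.ncard

/-- Number of ordered pairs (a,b), a ∈ A, b ∈ B, a + b = n. -/
noncomputable def RAB (A B : Set ℕ) (n : ℕ) : ℕ :=
  {p : ℕ × ℕ | p.1 + p.2 = n ∧ p.1 ∈ A ∧ p.2 ∈ B}.ncard

private lemma count1_step (n : ℕ) :
    (Nat.digits 2 n).count 1 = n % 2 + (Nat.digits 2 (n / 2)).count 1 := by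
  rcases Nat.eq_zero_or_pos n with h | h
  · simp [h]
  · rw [Nat.digits_def' (by norm_num) h, List.count_cons]
    rcases Nat.mod_two_eq_zero_or_one n with h2 | h2 <;> simp [h2] <;> omega

private lemma count1_compl : ∀ (m a b : ℕ), a + b = 2 ^ m - 1 →
    (Nat.digits 2 a).count 1 + (Nat.digits 2 b).count 1 = m := by
  intro m
  induction m with
  | zero => intro a b h; simp at h; simp [h.1, h.2]
  | succ m ih =>
    intro a b h
    have hpow : 0 < 2 ^ m := Nat.pow_pos (by norm_num)
    have hodd : (a + b) % 2 = 1 := by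
      rw [h, pow_succ]; omega
    have hmod : a % 2 + b % 2 = 1 := by omega
    have hdiv : a / 2 + b / 2 = 2 ^ m - 1 := by
      have := Nat.div_add_mod a 2
      have := Nat.div_add_mod b 2
      have hp : 2 ^ (m + 1) = 2 * 2 ^ m := by ring
      omega
    have := ih (a / 2) (b / 2) hdiv
    rw [count1_step a, count1_step b]
    omega

theorem stmt_1 (l : ℕ) : R2 A0 (2 ^ (2 * l + 1) - 1) = 0 := by
  have : {p : ℕ × ℕ | p.1 < p.2 ∧ p.1 + p.2 = 2 ^ (2 * l + 1) - 1 ∧ p.1 ∈ A0 ∧ p.2 ∈ A0}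
      = (∅ : Set (ℕ × ℕ)) := by
    ext ⟨a, b⟩
    simp only [Set.mem_setOf_eq, Set.mem_empty_iff_false, iff_false, not_and]
    intro _ hsum ha hb
    have hc := count1_compl (2 * l + 1) a b hsum
    rcases ha.add hb with ⟨k, hk⟩
    omega
  rw [R2, this, Set.ncard_empty]
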